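/- Let X ~ NegBin(k, 1/2) and let Y be a random variable whose conditional distribution given X is NegBin(max(X−1, 0), 1/2). Then E[Y] = k − 1 + 2^{−k} and Var[Y] ≤ 4k − 2 + 2^{1−k}. -/

import Mathlib

/-- The negative binomial pmf `NegBin(k, 1/2)`: probability that there are `m`
failures before the `k`-th success in fair coin flips,
`P[X = m] = C(m+k-1, m)·2^{-(m+k)}`. -/
noncomputable def negbin (k m : ℕ) : ℝ := (Nat.choose (m + k - 1) m : ℝ) / 2 ^ (m + k)

lemma negbin_hasSum (m : ℕ) : HasSum (negbin m) 1 := by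
  cases m with
  | zero =>
    have : negbin 0 = fun y : ℕ => if y = 0 then (1 : ℝ) else 0 := by
      funext y
      cases y with
      | zero => simp [negbin]
      | succ n =>
        simp [negbin, Nat.choose_eq_zero_of_lt (by omega : n + 1 + 0 - 1 < n + 1)]
    rw [this]
    simpa using hasSum_ite_eq (0 : ℕ) (1 : ℝ)
  | succ p =>
    have h := (hasSum_choose_mul_geometric_of_norm_lt_one (𝕜 := ℝ) p
      (r := 1/2) (by norm_num)).mul_right ((1/2 : ℝ) ^ (p + 1))
    have he : (fun n : ℕ => ((n + p).choose p : ℝ) * (1/2) ^ n * (1/2) ^ (p+1))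
        = negbin (p + 1) := by
      funext n
      have : (n + (p+1) - 1) = n + p := by omega
      rw [negbin, this, Nat.choose_symm_add,
        eq_div_iff (by positivity : (2:ℝ) ^ (n + (p+1)) ≠ 0)]
      rw [pow_add]
      field_simp
      have hn : ((1:ℝ)/2)^n * 2^n = 1 := by rw [← mul_pow]; norm_num
      have hp' : ((1:ℝ)/2)^p * 2^p = 1 := by rw [← mul_pow]; norm_num
      linear_combination (2 * (↑((n + p).choose p) : ℝ) * (1/2:ℝ)^p * 2^p) * hn
        + (2 * (↑((n + p).choose p) : ℝ)) * hp'
    rw [he] at h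
    convert h using 1
    · rfl
    have h12 : ((1:ℝ) - 1/2) = 1/2 := by norm_num
    rw [h12, one_div, inv_mul_cancel₀ (by positivity)]

lemma negbin_succ_mul (m n : ℕ) :
    negbin m (n + 1) * ((n : ℝ) + 1) = (m : ℝ) * negbin (m + 1) n := by
  have key : (n + 1) * Nat.choose (n + m) (n + 1) = m * Nat.choose (n + m) n := by
    cases m with
    | zero => simp [Nat.choose_eq_zero_of_lt (by omega : n + 0 < n + 1)]
    | succ q =>
      have h1 := Nat.add_one_mul_choose_eq (n + q) n
      have h2 := Nat.add_one_mul_choose_eq (n + q) q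
      have e1 : Nat.choose (n + q) n = Nat.choose (n + q) q := Nat.choose_symm_add
      have e2 : Nat.choose (n + q + 1) (q + 1) = Nat.choose (n + q + 1) n := by
        have : n + q + 1 = n + (q + 1) := by omega
        rw [this, Nat.choose_symm_add]
      have h1' : (n + q + 1) * Nat.choose (n + q) n
          = Nat.choose (n + q + 1) (n + 1) * (n + 1) := h1
      have h2' : (n + q + 1) * Nat.choose (n + q) q
          = Nat.choose (n + q + 1) (q + 1) * (q + 1) := h2
      rw [e1] at h1'
      rw [e2] at h2'
      have : Nat.choose (n + q + 1) (n + 1) * (n + 1)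
          = Nat.choose (n + q + 1) n * (q + 1) := by rw [← h1', h2']
      have hn1 : n + (q + 1) - 1 = n + q := by omega
      calc (n + 1) * Nat.choose (n + q + 1) (n + 1)
          = Nat.choose (n + q + 1) (n + 1) * (n + 1) := by ring
        _ = Nat.choose (n + q + 1) n * (q + 1) := this
        _ = (q + 1) * Nat.choose (n + q + 1) n := by ring
  have hc : ((n : ℝ) + 1) * (Nat.choose (n + m) (n + 1) : ℝ)
      = (m : ℝ) * (Nat.choose (n + m) n : ℝ) := by
    exact_mod_cast congrArg (Nat.cast : ℕ → ℝ) key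
  rw [negbin, negbin]
  have e1 : n + 1 + m - 1 = n + m := by omega
  have e2 : n + (m + 1) - 1 = n + m := by omega
  have e3 : n + 1 + m = n + m + 1 := by omega
  have e4 : n + (m + 1) = n + m + 1 := by omega
  rw [e1, e2, e3, e4]
  rw [div_mul_eq_mul_div, mul_comm]
  rw [hc]
  ring

lemma negbin_hasSum_mul (m : ℕ) :
    HasSum (fun y : ℕ => negbin m y * y) (m : ℝ) := by
  have h : HasSum (fun n : ℕ => negbin m (n + 1) * ((n : ℕ) + 1 : ℝ)) (m : ℝ) := by
    have := (negbin_hasSum (m + 1)).mul_left (m : ℝ)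
    rw [mul_one] at this
    convert this using 2 with n
    · rfl
    exact negbin_succ_mul m n
  have := (hasSum_nat_add_iff (f := fun y : ℕ => negbin m y * y) 1).mp (by
    convert h using 2 with n
    · rfl
    push_cast
    ring)
  simpa using this

lemma negbin_hasSum_sq (m : ℕ) :
    HasSum (fun y : ℕ => negbin m y * (y : ℝ) ^ 2) ((m : ℝ) ^ 2 + 2 * m) := by
  have h : HasSum (fun n : ℕ => negbin m (n + 1) * ((n : ℝ) + 1) ^ 2)
      ((m : ℝ) ^ 2 + 2 * m) := by
    have h1 := ((negbin_hasSum_mul (m + 1)).mul_left (m : ℝ)).add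
      ((negbin_hasSum (m + 1)).mul_left (m : ℝ))
    have h1' : HasSum (fun n : ℕ => (m : ℝ) * (negbin (m+1) n * n) + (m : ℝ) * negbin (m+1) n)
        ((m : ℝ) ^ 2 + 2 * m) := by
      convert h1 using 1
      · rfl
      push_cast
      ring
    convert h1' using 2 with n
    have := negbin_succ_mul m n
    nlinarith [negbin_succ_mul m n]
  have := (hasSum_nat_add_iff (f := fun y : ℕ => negbin m y * (y : ℝ) ^ 2) 1).mp (by
    convert h using 2 with n
    · rfl
    push_cast
    ring)
  simpa using this

lemma negbin_zero_eval (k : ℕ) : negbin k 0 = (1 / 2 : ℝ) ^ k := by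
  simp [negbin, div_pow]

lemma hasSum_mean (k : ℕ) :
    HasSum (fun x : ℕ => negbin k x * ((x - 1 : ℕ) : ℝ)) ((k : ℝ) - 1 + (1 / 2) ^ k) := by
  have h := ((negbin_hasSum_mul k).sub (negbin_hasSum k)).add
    (hasSum_ite_eq (0 : ℕ) ((1 / 2 : ℝ) ^ k))
  convert h using 2 with x
  · rfl
  cases x with
  | zero => simp [negbin_zero_eval]
  | succ n =>
    have : (n + 1 - 1 : ℕ) = n := by omega
    rw [this]
    simp only [Nat.succ_ne_zero, if_false]
    push_cast
    ring

lemma hasSum_sqmean (k : ℕ) :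
    HasSum (fun x : ℕ => negbin k x * (((x - 1 : ℕ) : ℝ) ^ 2 + 2 * ((x - 1 : ℕ) : ℝ)))
      ((k : ℝ) ^ 2 + 2 * k - 1 + (1 / 2) ^ k) := by
  have h := ((negbin_hasSum_sq k).sub (negbin_hasSum k)).add
    (hasSum_ite_eq (0 : ℕ) ((1 / 2 : ℝ) ^ k))
  convert h using 2 with x
  · rfl
  cases x with
  | zero => simp [negbin_zero_eval]
  | succ n =>
    have : (n + 1 - 1 : ℕ) = n := by omega
    rw [this]
    simp only [Nat.succ_ne_zero, if_false]
    push_cast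
    ring

/-- if `X ~ NegBin(k,1/2)` and, conditionally on `X`,
`Y ~ NegBin(max(X-1,0), 1/2)` (joint pmf `negbin k x · negbin (x-1) y`), then
`E[Y] = k - 1 + 2^{-k}` and `Var[Y] ≤ 4k - 2 + 2^{1-k}`. -/
theorem negbin_compound_mean_var (k : ℕ) :
    (∑' x : ℕ, ∑' y : ℕ, negbin k x * negbin (x - 1) y * y)
      = (k : ℝ) - 1 + (1 / 2) ^ k ∧
    (∑' x : ℕ, ∑' y : ℕ, negbin k x * negbin (x - 1) y * (y : ℝ) ^ 2)
        - (∑' x : ℕ, ∑' y : ℕ, negbin k x * negbin (x - 1) y * y) ^ 2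
      ≤ 4 * (k : ℝ) - 2 + 2 * (1 / 2) ^ k := by
  have inner1 : ∀ x : ℕ, (∑' y : ℕ, negbin k x * negbin (x - 1) y * (y : ℝ))
      = negbin k x * ((x - 1 : ℕ) : ℝ) := by
    intro x
    calc (∑' y : ℕ, negbin k x * negbin (x - 1) y * (y : ℝ))
        = ∑' y : ℕ, negbin k x * (negbin (x - 1) y * y) := tsum_congr fun y => by ring
      _ = negbin k x * ∑' y : ℕ, negbin (x - 1) y * y := tsum_mul_left
      _ = negbin k x * ((x - 1 : ℕ) : ℝ) := by rw [(negbin_hasSum_mul (x - 1)).tsum_eq]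
  have inner2 : ∀ x : ℕ, (∑' y : ℕ, negbin k x * negbin (x - 1) y * (y : ℝ) ^ 2)
      = negbin k x * (((x - 1 : ℕ) : ℝ) ^ 2 + 2 * ((x - 1 : ℕ) : ℝ)) := by
    intro x
    calc (∑' y : ℕ, negbin k x * negbin (x - 1) y * (y : ℝ) ^ 2)
        = ∑' y : ℕ, negbin k x * (negbin (x - 1) y * (y : ℝ) ^ 2) :=
          tsum_congr fun y => by ring
      _ = negbin k x * ∑' y : ℕ, negbin (x - 1) y * (y : ℝ) ^ 2 := tsum_mul_left
      _ = negbin k x * (((x - 1 : ℕ) : ℝ) ^ 2 + 2 * ((x - 1 : ℕ) : ℝ)) := by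
          rw [(negbin_hasSum_sq (x - 1)).tsum_eq]
  have hmean : (∑' x : ℕ, ∑' y : ℕ, negbin k x * negbin (x - 1) y * (y : ℝ))
      = (k : ℝ) - 1 + (1 / 2) ^ k := by
    rw [tsum_congr inner1]
    exact (hasSum_mean k).tsum_eq
  have hsq : (∑' x : ℕ, ∑' y : ℕ, negbin k x * negbin (x - 1) y * (y : ℝ) ^ 2)
      = (k : ℝ) ^ 2 + 2 * k - 1 + (1 / 2) ^ k := by
    rw [tsum_congr inner2]
    exact (hasSum_sqmean k).tsum_eq
  refine ⟨hmean, ?_⟩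
  rw [hmean, hsq]
  set p : ℝ := (1 / 2) ^ k with hp
  have hp0 : (0 : ℝ) < p := by positivity
  have hbound : (1 : ℝ) - 2 * k ≤ p := by
    have h1 : (1 : ℝ) + (k : ℕ) * (-(1/2)) ≤ (1 + -(1/2)) ^ (k : ℕ) :=
      one_add_mul_le_pow (by norm_num) k
    have h2 : ((1 : ℝ) + -(1/2)) ^ k = p := by norm_num [hp]
    have hk : (0 : ℝ) ≤ (k : ℝ) := Nat.cast_nonneg k
    nlinarith
  nlinarith [mul_le_mul_of_nonneg_left hbound hp0.le]
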